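/- If A is an n×n positive definite matrix with m·I ≤ A ≤ M·I for 0 < m ≤ M, then tr(A⁻¹) ≤ (n²(m+M)²/(4mM)) · (tr A)⁻¹. -/

import Mathlib

open scoped ComplexOrder

open Matrix

/-- If `A` is an `n × n` positive definite matrix with `m • 1 ≤ A ≤ M • 1` for
`0 < m ≤ M`, then `tr(A⁻¹) ≤ (n² (m+M)² / (4 m M)) · (tr A)⁻¹`. -/
theorem trace_inv_le_kantorovich {n : ℕ} (A : Matrix (Fin n) (Fin n) ℂ) (hA : A.PosDef)
    (m M : ℝ) (hm : 0 < m) (hmM : m ≤ M)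
    (h1 : (A - m • (1 : Matrix (Fin n) (Fin n) ℂ)).PosSemidef)
    (h2 : ((M • (1 : Matrix (Fin n) (Fin n) ℂ)) - A).PosSemidef) :
    A⁻¹.trace.re ≤ ((n : ℝ) ^ 2 * (m + M) ^ 2 / (4 * m * M)) * (A.trace.re)⁻¹ := by
  classical
  have hH := hA.isHermitian
  set ev := hH.eigenvalues with hev
  set U : Matrix (Fin n) (Fin n) ℂ := (hH.eigenvectorUnitary : Matrix (Fin n) (Fin n) ℂ) with hU
  have hUU : U * star U = 1 := mem_unitaryGroup_iff.mp hH.eigenvectorUnitary.2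
  have hUU' : star U * U = 1 := mem_unitaryGroup_iff'.mp hH.eigenvectorUnitary.2
  have hspec : A = U * diagonal (fun i => (ev i : ℂ)) * star U := by
    exact hH.spectral_theorem
  have hpos : ∀ i, 0 < ev i := hA.eigenvalues_pos
  -- eigenvalue bounds
  have hbound : ∀ i, m ≤ ev i ∧ ev i ≤ M := by
    intro i
    set v : Fin n → ℂ := ⇑(hH.eigenvectorBasis i) with hv
    have hvv : dotProduct (star v) v = 1 := by
      have h : inner ℂ (hH.eigenvectorBasis i) (hH.eigenvectorBasis i) = (1:ℂ) := by
        simpa using orthonormal_iff_ite.mp hH.eigenvectorBasis.orthonormal i i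
      rw [EuclideanSpace.inner_eq_star_dotProduct, dotProduct_comm] at h
      exact h
    have hAv : A *ᵥ v = (ev i : ℂ) • v := by
      simpa [hv] using hH.mulVec_eigenvectorBasis i
    constructor
    · have h := h1.dotProduct_mulVec_nonneg v
      have hcalc : dotProduct (star v) ((A - (m:ℝ) • (1 : Matrix (Fin n) (Fin n) ℂ)) *ᵥ v)
          = ((ev i - m : ℝ) : ℂ) := by
        rw [sub_mulVec, smul_mulVec, one_mulVec, hAv, dotProduct_sub,
          dotProduct_smul, dotProduct_smul, hvv]
        push_cast
        simp [Complex.real_smul]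
      rw [hcalc] at h
      have := Complex.zero_le_real.mp h
      linarith
    · have h := h2.dotProduct_mulVec_nonneg v
      have hcalc : dotProduct (star v) (((M:ℝ) • (1 : Matrix (Fin n) (Fin n) ℂ) - A) *ᵥ v)
          = ((M - ev i : ℝ) : ℂ) := by
        rw [sub_mulVec, smul_mulVec, one_mulVec, hAv, dotProduct_sub,
          dotProduct_smul, dotProduct_smul, hvv]
        push_cast
        simp [Complex.real_smul]
      rw [hcalc] at h
      have := Complex.zero_le_real.mp h
      linarith
  -- traces
  have htrA : A.trace.re = ∑ i, ev i := by
    conv_lhs => rw [hspec]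
    rw [trace_mul_cycle, hUU', one_mul, trace_diagonal]
    push_cast
    simp
  have hAinv : A⁻¹ = U * diagonal (fun i => (((ev i)⁻¹ : ℝ) : ℂ)) * star U := by
    apply inv_eq_right_inv
    rw [hspec]
    have hD : diagonal (fun i => (ev i : ℂ)) * diagonal (fun i => (((ev i)⁻¹ : ℝ) : ℂ)) = 1 := by
      rw [diagonal_mul_diagonal]
      have hfun : (fun i => (ev i : ℂ) * (((ev i)⁻¹ : ℝ) : ℂ)) = fun _ => (1:ℂ) := by
        funext i
        push_cast
        exact mul_inv_cancel₀ (by exact_mod_cast (hpos i).ne')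
      rw [hfun]
      exact diagonal_one
    calc U * diagonal (fun i => (ev i : ℂ)) * star U *
          (U * diagonal (fun i => (((ev i)⁻¹ : ℝ) : ℂ)) * star U)
        = U * ((diagonal (fun i => (ev i : ℂ)) * ((star U * U) *
          (diagonal (fun i => (((ev i)⁻¹ : ℝ) : ℂ)) * star U)))) := by
          simp only [Matrix.mul_assoc]
      _ = U * (diagonal (fun i => (ev i : ℂ)) * (diagonal (fun i => (((ev i)⁻¹ : ℝ) : ℂ)) * star U)) := by
          rw [hUU', one_mul]
      _ = U * ((diagonal (fun i => (ev i : ℂ)) * diagonal (fun i => (((ev i)⁻¹ : ℝ) : ℂ))) * star U) := by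
          rw [Matrix.mul_assoc]
      _ = 1 := by rw [hD, one_mul, hUU]
  have htrAinv : A⁻¹.trace.re = ∑ i, (ev i)⁻¹ := by
    rw [hAinv, trace_mul_cycle, hUU', one_mul, trace_diagonal]
    push_cast
    simp
  rw [htrA, htrAinv]
  set S := ∑ i, ev i with hS
  rcases Nat.eq_zero_or_pos n with hn | hn
  · subst hn
    simp [hS]
  have hSpos : 0 < S := Finset.sum_pos (fun i _ => hpos i) (by simp [Finset.univ_nonempty_iff, Fin.pos_iff_nonempty.mp hn])
  have hMpos : 0 < M := lt_of_lt_of_le hm hmM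
  have hstep : ∑ i, (ev i)⁻¹ ≤ ((n : ℝ) * (m + M) - S) / (m * M) := by
    have hterm : ∀ i ∈ Finset.univ, (ev i)⁻¹ ≤ (m + M - ev i) / (m * M) := by
      intro i _
      rw [le_div_iff₀ (by positivity)]
      have hkey : ev i * (ev i)⁻¹ = 1 := mul_inv_cancel₀ (hpos i).ne'
      have hprod : 0 ≤ (ev i - m) * (M - ev i) :=
        mul_nonneg (by linarith [(hbound i).1]) (by linarith [(hbound i).2])
      have hinv : 0 ≤ (ev i)⁻¹ := (inv_pos.mpr (hpos i)).le
      nlinarith [hpos i, (hbound i).1, (hbound i).2]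
    calc ∑ i, (ev i)⁻¹ ≤ ∑ i, (m + M - ev i) / (m * M) := Finset.sum_le_sum hterm
      _ = ((n : ℝ) * (m + M) - S) / (m * M) := by
          rw [← Finset.sum_div, Finset.sum_sub_distrib, Finset.sum_const, Finset.card_univ]
          simp only [Fintype.card_fin, nsmul_eq_mul, hS]
  refine hstep.trans ?_
  have hrhs : ((n:ℝ)^2 * (m+M)^2 / (4*m*M)) * S⁻¹ = ((n:ℝ)^2 * (m+M)^2) / (4*m*M*S) := by
    field_simp
  rw [hrhs, div_le_div_iff₀ (by positivity) (by positivity)]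
  nlinarith [mul_nonneg (sq_nonneg ((n:ℝ)*(m+M) - 2*S)) (mul_pos hm hMpos).le, hSpos,
    mul_pos hm hMpos]
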